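/- For every positive integer N, the polynomial identity ∑_{n=1}^{N} (-1)^n * C(N,n) * t^n / n = ∑_{n=1}^{N} ((1-t)^n - 1) / n holds in ℚ[t]. -/

import Mathlib

open Polynomial Finset

lemma key_sum (k : ℕ) (hk : 1 ≤ k) : ∀ N, k ≤ N →
    ∑ n ∈ Finset.Icc k N, ((n.choose k : ℚ) / n) = (N.choose k : ℚ) / k := by
  intro N
  induction N with
  | zero => intro h; exact absurd (hk.trans h) (by omega)
  | succ N ih =>
    intro hkN
    rcases Nat.lt_or_ge N k with h | h
    · have : k = N + 1 := by omega
      subst this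
      simp
    · rw [Finset.sum_Icc_succ_top (by omega), ih h]
      have hnat : (N + 1) * N.choose (k - 1) = (N + 1).choose k * k := by
        have := Nat.add_one_mul_choose_eq N (k - 1)
        simpa [Nat.succ_eq_add_one, Nat.sub_add_cancel hk] using this
      have hsplit : (N + 1).choose k = N.choose k + N.choose (k - 1) := by
        have := Nat.choose_succ_succ N (k - 1)
        simpa [Nat.sub_add_cancel hk, Nat.add_comm] using this
      have hk0 : (k : ℚ) ≠ 0 := by positivity
      have hN0 : ((N : ℚ) + 1) ≠ 0 := by positivity
      have hq : (((N+1).choose k : ℚ)) / ((N:ℚ)+1) = (N.choose (k-1) : ℚ) / k := by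
        rw [div_eq_div_iff hN0 hk0]
        have hn2 : (N+1).choose k * k = N.choose (k-1) * (N+1) := by rw [← hnat]; ring
        exact_mod_cast hn2
      push_cast
      rw [hq, ← add_div, hsplit]
      push_cast
      ring

lemma expand_pow (n : ℕ) :
    (1 - Polynomial.X : ℚ[X]) ^ n - 1
      = ∑ k ∈ Finset.Icc 1 n, Polynomial.C ((-1 : ℚ) ^ k * n.choose k) * Polynomial.X ^ k := by
  have h : (1 - Polynomial.X : ℚ[X]) ^ n
      = ∑ k ∈ Finset.range (n + 1), Polynomial.C ((-1 : ℚ) ^ k * n.choose k) * Polynomial.X ^ k := by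
    have h2 := add_pow (-Polynomial.X : ℚ[X]) 1 n
    rw [show (-Polynomial.X + 1 : ℚ[X]) = 1 - Polynomial.X by ring] at h2
    rw [h2]
    refine Finset.sum_congr rfl fun k hk => ?_
    rw [neg_pow]
    simp only [one_pow, mul_one, Polynomial.C_mul, map_neg, map_one, map_pow,
      Polynomial.C_eq_natCast]
    ring
  rw [h]
  have hins : Finset.range (n + 1) = insert 0 (Finset.Icc 1 n) := by
    ext x
    simp only [Finset.mem_range, Finset.mem_insert, Finset.mem_Icc]
    omega
  rw [hins, Finset.sum_insert (by simp)]
  simp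

/-- For every positive integer `N`:
`∑_{n=1}^{N} (-1)^n * C(N,n) * t^n / n = ∑_{n=1}^{N} ((1-t)^n - 1) / n` in `ℚ[t]`. -/
theorem euler_poly_identity_left (N : ℕ) (hN : 0 < N) :
    ∑ n ∈ Finset.Icc 1 N,
        Polynomial.C ((-1 : ℚ) ^ n * (N.choose n : ℚ) / n) * Polynomial.X ^ n
      = ∑ n ∈ Finset.Icc 1 N,
          Polynomial.C ((1 : ℚ) / n) * ((1 - Polynomial.X) ^ n - 1) := by
  have hR : ∑ n ∈ Finset.Icc 1 N, Polynomial.C ((1 : ℚ) / n) * ((1 - Polynomial.X) ^ n - 1)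
      = ∑ n ∈ Finset.Icc 1 N, ∑ k ∈ Finset.Icc 1 n,
          Polynomial.C (1/(n:ℚ)) * (Polynomial.C ((-1 : ℚ) ^ k * n.choose k) * Polynomial.X ^ k) :=
    Finset.sum_congr rfl fun n _ => by rw [expand_pow n, Finset.mul_sum]
  rw [hR]
  have step : ∀ n ∈ Finset.Icc 1 N,
      ∑ k ∈ Finset.Icc 1 n, Polynomial.C (1/(n:ℚ)) * (Polynomial.C ((-1 : ℚ) ^ k * n.choose k) * Polynomial.X ^ k)
      = ∑ k ∈ Finset.Icc 1 N, if k ≤ n then Polynomial.C (1/(n:ℚ)) * (Polynomial.C ((-1 : ℚ) ^ k * n.choose k) * Polynomial.X ^ k) else 0 := by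
    intro n hn
    simp only [Finset.mem_Icc] at hn
    rw [← Finset.sum_filter]
    apply Finset.sum_congr _ (fun _ _ => rfl)
    ext x
    simp only [Finset.mem_Icc, Finset.mem_filter]
    omega
  rw [Finset.sum_congr rfl step, Finset.sum_comm]
  refine Finset.sum_congr rfl fun k hk => ?_
  simp only [Finset.mem_Icc] at hk
  have h1 : ∑ n ∈ Finset.Icc 1 N, (if k ≤ n then Polynomial.C (1/(n:ℚ)) * (Polynomial.C ((-1 : ℚ) ^ k * n.choose k) * Polynomial.X ^ k) else 0)
      = ∑ n ∈ Finset.Icc k N, Polynomial.C (1/(n:ℚ)) * (Polynomial.C ((-1 : ℚ) ^ k * n.choose k) * Polynomial.X ^ k) := by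
    rw [← Finset.sum_filter]
    apply Finset.sum_congr _ (fun _ _ => rfl)
    ext x
    simp only [Finset.mem_Icc, Finset.mem_filter]
    omega
  rw [h1]
  have h2 : ∀ n ∈ Finset.Icc k N,
      Polynomial.C (1/(n:ℚ)) * (Polynomial.C ((-1 : ℚ) ^ k * n.choose k) * Polynomial.X ^ k)
      = Polynomial.C ((-1:ℚ)^k * ((n.choose k : ℚ)/n)) * Polynomial.X ^ k := by
    intro n hn
    rw [← mul_assoc, ← Polynomial.C_mul]
    ring_nf
  rw [Finset.sum_congr rfl h2, ← Finset.sum_mul, ← map_sum, ← Finset.mul_sum,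
    key_sum k hk.1 N hk.2, mul_div_assoc]
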